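/- Fix integers n ≥ 1 and j ≥ 2, and reals q > 1, a > 0, 0 < β < 1, p̃ ∈ (0,1). Set ρ_l = l + 2 − a/q; ψ_l(v) = min{β(q−1)/q^{l+1}, β/q^l − v} for l = 0,…,j−1 and ψ_j(v) = β/q^j − v; and ψ_fail(v) = min{1−β, 1−v}. Let r:[0,1]→[0,∞) be integrable and set C̃(k) = (q^k/β)·Σ_{l=k}^j (a·q^l + ρ_l)·∫_0^{β/q^l} r(v)·ψ_l(v) dv for k = 0,…,j. Suppose d_0,…,d_{j+1} ≥ 0 satisfy: d_0 ≤ (1/β)·∫_0^1 r(v)·ψ_fail(v) dv + C̃(0) + Σ_{l=1}^j ((q−1)/q^l)·d_l + (1/q^j)·d_{j+1}; d_k ≤ (1−p̃)·d_{k−1} + p̃·(C̃(k) + Σ_{l=1}^{j−k} ((q−1)/q^l)·d_{k+l} + (1/q^{j−k})·d_{j+1}) for k = 1,…,j−1; d_j ≤ (1−p̃)·d_{j−1} + p̃·(C̃(j) + d_{j+1}); d_{j+1} ≤ 0; and ∫_0^1 r(v)·Σ_{i=1}^n (1−v)^i dv = 1. Suppose α_0,…,α_{j+1} ≥ 0 and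 ζ ∈ ℝ satisfy: α_0 ≥ (1−p̃)·α_1 + 1; α_k ≥ (1−p̃)·α_{k+1} + ((q−1)/q^k)·α_0 + p̃·Σ_{l=1}^{k−1} ((q−1)/q^{k−l})·α_l for k = 1,…,j−1; α_j ≥ ((q−1)/q^j)·α_0 + p̃·Σ_{l=1}^{j−1} ((q−1)/q^{j−l})·α_l; α_{j+1} ≥ (1/q^j)·α_0 + p̃·Σ_{l=1}^j (1/q^{j−l})·α_l; and for every v ∈ [0,1]: ζ·Σ_{i=1}^n (1−v)^i ≥ (α_0/β)·(ψ_fail(v) + Σ_{l=0}^j (a·q^l + ρ_l)·ψ_l(v)·1_{[0, β/q^l]}(v)) + (p̃/β)·Σ_{k=1}^j α_k·q^k·(Σ_{l=k}^j (a·q^l + ρ_l)·ψ_l(v)·1_{[0, β/q^l]}(v)). Then ζ ≥ d_0. -/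

import Mathlib

open MeasureTheory Finset

/-- `ρ_l = l + 2 - a/q`. -/
noncomputable def rho (a q : ℝ) (l : ℕ) : ℝ := (l : ℝ) + 2 - a/q

/-- `ψ_l(v) = min{β(q-1)/q^{l+1}, β/q^l - v}` for `l < j`, and `ψ_j(v) = β/q^j - v`. -/
noncomputable def psi (j : ℕ) (q β : ℝ) (l : ℕ) (v : ℝ) : ℝ :=
  if l < j then min (β*(q - 1)/q^(l+1)) (β/q^l - v) else β/q^j - v

/-- `ψ_fail(v) = min{1-β, 1-v}`. -/
noncomputable def psiFail (β : ℝ) (v : ℝ) : ℝ := min (1 - β) (1 - v)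

/-- The cost upper bounds
`C̃(k) = (q^k/β) ∑_{l=k}^j (a q^l + ρ_l) ∫_0^{β/q^l} r(v) ψ_l(v) dv`. -/
noncomputable def Ctil (j : ℕ) (q β a : ℝ) (r : ℝ → ℝ) (k : ℕ) : ℝ :=
  q^k/β * ∑ l ∈ Finset.Icc k j,
    (a*q^l + rho a q l) * ∫ v in (0:ℝ)..(β/q^l), r v * psi j q β l v

private lemma sum_Icc_split (j : ℕ) (hj : 2 ≤ j) (f : ℕ → ℝ) :
    ∑ k ∈ Icc 0 j, f k = f 0 + ∑ k ∈ Icc 1 (j-1), f k + f j := by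
  have h1 : Icc 0 j = insert 0 (Icc 1 j) := by ext x; simp [Finset.mem_Icc]; omega
  have h2 : Icc 1 j = insert j (Icc 1 (j-1)) := by ext x; simp [Finset.mem_Icc]; omega
  rw [h1, Finset.sum_insert (by simp), h2,
    Finset.sum_insert (by simp [Finset.mem_Icc]; omega)]
  ring

private lemma sum_top_split (j : ℕ) (hj : 1 ≤ j) (f : ℕ → ℝ) :
    ∑ k ∈ Icc 1 j, f k = ∑ k ∈ Icc 1 (j-1), f k + f j := by
  have h2 : Icc 1 j = insert j (Icc 1 (j-1)) := by ext x; simp [Finset.mem_Icc]; omega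
  rw [h2, Finset.sum_insert (by simp [Finset.mem_Icc]; omega)]; ring

private lemma sum_shift (j : ℕ) (hj : 1 ≤ j) (f g : ℕ → ℝ) :
    ∑ k ∈ Icc 1 j, g k * f (k-1) = g 1 * f 0 + ∑ m ∈ Icc 1 (j-1), g (m+1) * f m := by
  have h : ∑ k ∈ Icc 1 j, g k * f (k-1) = ∑ m ∈ Icc 0 (j-1), g (m+1) * f m := by
    refine Finset.sum_nbij' (fun k => k - 1) (fun m => m + 1) ?_ ?_ ?_ ?_ ?_
    · intro a ha; simp only [Finset.mem_Icc] at *; omega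
    · intro a ha; simp only [Finset.mem_Icc] at *; omega
    · intro a ha; simp only [Finset.mem_Icc] at ha; omega
    · intro a ha; simp only [Finset.mem_Icc] at ha; omega
    · intro a ha; simp only [Finset.mem_Icc] at ha
      have : a - 1 + 1 = a := by omega
      rw [this]
  rw [h]
  have h1 : Icc 0 (j-1) = insert 0 (Icc 1 (j-1)) := by ext x; simp [Finset.mem_Icc]; omega
  rw [h1, Finset.sum_insert (by simp)]

private lemma sum_swap_tri (j : ℕ) (f : ℕ → ℕ → ℝ) :
    ∑ k ∈ Icc 1 (j-1), ∑ l ∈ Icc 1 (j-k), f k (k+l)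
      = ∑ m ∈ Icc 1 j, ∑ k ∈ Icc 1 (m-1), f k m := by
  have step1 : ∀ k ∈ Icc 1 (j-1), ∑ l ∈ Icc 1 (j-k), f k (k+l) = ∑ m ∈ Icc (k+1) j, f k m := by
    intro k hk
    simp only [Finset.mem_Icc] at hk
    refine Finset.sum_nbij' (fun l => k + l) (fun m => m - k) ?_ ?_ ?_ ?_ ?_
    · intro a ha; simp only [Finset.mem_Icc] at *; omega
    · intro a ha; simp only [Finset.mem_Icc] at *; omega
    · intro a ha; omega
    · intro a ha; simp only [Finset.mem_Icc] at ha; omega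
    · intro a ha; rfl
  rw [Finset.sum_congr rfl step1]
  have step2 : ∀ k, ∑ m ∈ Icc (k+1) j, f k m = ∑ m ∈ Icc 1 j, if k < m then f k m else 0 := by
    intro k
    have : Icc (k+1) j = (Icc 1 j).filter (fun m => k < m) := by
      ext x; simp [Finset.mem_Icc, Finset.mem_filter]; omega
    rw [this, Finset.sum_filter]
  rw [Finset.sum_congr rfl (fun k _ => step2 k)]
  have step3 : ∑ k ∈ Icc 1 (j-1), ∑ m ∈ Icc 1 j, (if k < m then f k m else 0)
      = ∑ k ∈ Icc 1 j, ∑ m ∈ Icc 1 j, (if k < m then f k m else 0) := by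
    apply Finset.sum_subset
    · intro x; simp [Finset.mem_Icc]; omega
    · intro x hx hx2
      simp only [Finset.mem_Icc] at hx hx2
      apply Finset.sum_eq_zero
      intro m hm; simp only [Finset.mem_Icc] at hm
      rw [if_neg]; omega
  rw [step3, Finset.sum_comm]
  apply Finset.sum_congr rfl
  intro m hm
  simp only [Finset.mem_Icc] at hm
  have : Icc 1 (m-1) = (Icc 1 j).filter (fun k => k < m) := by
    ext x; simp [Finset.mem_Icc, Finset.mem_filter]; omega
  rw [this, Finset.sum_filter]

set_option maxHeartbeats 2000000 in
private lemma stepA (j : ℕ) (hj : 2 ≤ j) (q pt : ℝ) (hq : 1 < q)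
    (hpt0 : 0 < pt) (hpt1 : pt < 1)
    (C : ℕ → ℝ) (F : ℝ) (d : ℕ → ℝ) (hd0 : ∀ k ≤ j + 1, 0 ≤ d k)
    (hp1 : d 0 ≤ F + C 0 + (∑ l ∈ Icc 1 j, (q - 1)/q^l * d l) + (1/q^j) * d (j+1))
    (hp2 : ∀ k, 1 ≤ k → k ≤ j - 1 →
      d k ≤ (1 - pt) * d (k-1)
        + pt * (C k + (∑ l ∈ Icc 1 (j-k), (q - 1)/q^l * d (k+l))
            + (1/q^(j-k)) * d (j+1)))
    (hp3 : d j ≤ (1 - pt) * d (j-1) + pt * (C j + d (j+1)))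
    (hp4 : d (j+1) ≤ 0)
    (α : ℕ → ℝ) (hαpos : ∀ k ≤ j + 1, 0 ≤ α k)
    (hd1 : α 0 ≥ (1 - pt) * α 1 + 1)
    (hd2 : ∀ k, 1 ≤ k → k ≤ j - 1 →
      α k ≥ (1 - pt) * α (k+1) + (q - 1)/q^k * α 0
        + pt * ∑ l ∈ Icc 1 (k-1), (q - 1)/q^(k-l) * α l)
    (hd3 : α j ≥ (q - 1)/q^j * α 0 + pt * ∑ l ∈ Icc 1 (j-1), (q - 1)/q^(j-l) * α l) :
    d 0 ≤ α 0 * F + α 0 * C 0 + pt * ∑ k ∈ Icc 1 j, α k * C k := by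
  have hj1 : 1 ≤ j := by omega
  have h1pt : (0:ℝ) ≤ 1 - pt := by linarith
  have hq0 : (0:ℝ) < q := by linarith
  -- key1 : weighted sum of primal constraints
  have key1 : ∑ k ∈ Icc 0 j, α k * d k ≤
      α 0 * (F + C 0 + (∑ l ∈ Icc 1 j, (q - 1)/q^l * d l) + (1/q^j) * d (j+1))
      + ∑ k ∈ Icc 1 (j-1), α k * ((1 - pt) * d (k-1)
          + pt * (C k + (∑ l ∈ Icc 1 (j-k), (q - 1)/q^l * d (k+l))
              + (1/q^(j-k)) * d (j+1)))
      + α j * ((1 - pt) * d (j-1) + pt * (C j + d (j+1))) := by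
    rw [sum_Icc_split j hj]
    refine add_le_add (add_le_add
      (mul_le_mul_of_nonneg_left hp1 (hαpos 0 (by omega)))
      (Finset.sum_le_sum ?_))
      (mul_le_mul_of_nonneg_left hp3 (hαpos j (by omega)))
    intro k hk
    simp only [Finset.mem_Icc] at hk
    exact mul_le_mul_of_nonneg_left (hp2 k hk.1 hk.2) (hαpos k (by omega))
  -- expansion of the middle sum
  have expand : ∑ k ∈ Icc 1 (j-1), α k * ((1 - pt) * d (k-1)
          + pt * (C k + (∑ l ∈ Icc 1 (j-k), (q - 1)/q^l * d (k+l))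
              + (1/q^(j-k)) * d (j+1)))
      = (1 - pt) * (∑ k ∈ Icc 1 (j-1), α k * d (k-1))
        + pt * (∑ k ∈ Icc 1 (j-1), α k * C k)
        + pt * (∑ k ∈ Icc 1 (j-1), ∑ l ∈ Icc 1 (j-k),
            (α k * ((q - 1)/q^((k+l)-k))) * d (k+l))
        + pt * (∑ k ∈ Icc 1 (j-1), α k * (1/q^(j-k))) * d (j+1) := by
    have RHS4 : (pt * ∑ k ∈ Icc 1 (j-1), α k * (1/q^(j-k))) * d (j+1)
        = ∑ k ∈ Icc 1 (j-1), pt * ((α k * (1/q^(j-k))) * d (j+1)) := by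
      rw [Finset.mul_sum, Finset.sum_mul]
      exact Finset.sum_congr rfl (fun k _ => by ring)
    rw [Finset.mul_sum, Finset.mul_sum, Finset.mul_sum, RHS4]
    rw [← Finset.sum_add_distrib, ← Finset.sum_add_distrib, ← Finset.sum_add_distrib]
    apply Finset.sum_congr rfl
    intro k hk
    have hin : α k * (∑ l ∈ Icc 1 (j-k), (q - 1)/q^l * d (k+l))
        = ∑ l ∈ Icc 1 (j-k), (α k * ((q - 1)/q^((k+l)-k))) * d (k+l) := by
      rw [Finset.mul_sum]
      apply Finset.sum_congr rfl
      intro l hl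
      have : k + l - k = l := by omega
      rw [this]; ring
    have h4 : pt * ∑ l ∈ Icc 1 (j-k), (α k * ((q - 1)/q^((k+l)-k))) * d (k+l)
        = ∑ l ∈ Icc 1 (j-k), pt * ((α k * ((q - 1)/q^((k+l)-k))) * d (k+l)) := by
      rw [Finset.mul_sum]
    calc α k * ((1 - pt) * d (k-1)
          + pt * (C k + (∑ l ∈ Icc 1 (j-k), (q - 1)/q^l * d (k+l))
              + (1/q^(j-k)) * d (j+1)))
        = (1 - pt) * (α k * d (k-1)) + pt * (α k * C k)
          + pt * (α k * (∑ l ∈ Icc 1 (j-k), (q - 1)/q^l * d (k+l)))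
          + pt * (α k * (1/q^(j-k)) * d (j+1)) := by ring
      _ = _ := by rw [hin]
  -- shift identity
  have shift : ((∑ k ∈ Icc 1 (j-1), α k * d (k-1)) + α j * d (j-1))
      = α 1 * d 0 + ∑ m ∈ Icc 1 (j-1), α (m+1) * d m := by
    rw [← sum_top_split j hj1 (fun k => α k * d (k-1))]
    exact sum_shift j hj1 d α
  have shift' := congrArg (fun x => (1 - pt) * x) shift
  -- swap identity
  have swap : (∑ k ∈ Icc 1 (j-1), ∑ l ∈ Icc 1 (j-k),
        (α k * ((q - 1)/q^((k+l)-k))) * d (k+l))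
      = (∑ m ∈ Icc 1 (j-1), (∑ k ∈ Icc 1 (m-1), (q - 1)/q^(m-k) * α k) * d m)
        + (∑ k ∈ Icc 1 (j-1), (q - 1)/q^(j-k) * α k) * d j := by
    rw [sum_swap_tri j (fun k m => (α k * ((q - 1)/q^(m-k))) * d m)]
    rw [sum_top_split j hj1]
    congr 1
    · apply Finset.sum_congr rfl
      intro m hm
      rw [Finset.sum_mul]
      exact Finset.sum_congr rfl (fun k hk => by ring)
    · rw [Finset.sum_mul]
      exact Finset.sum_congr rfl (fun k hk => by ring)
  have S1split : (∑ l ∈ Icc 1 j, (q - 1)/q^l * d l)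
      = (∑ l ∈ Icc 1 (j-1), (q - 1)/q^l * d l) + (q - 1)/q^j * d j :=
    sum_top_split j hj1 _
  have costm : pt * ((∑ k ∈ Icc 1 (j-1), α k * C k) + α j * C j)
      = pt * ∑ k ∈ Icc 1 j, α k * C k := by
    rw [← sum_top_split j hj1 (fun k => α k * C k)]
  -- coefficient bounds
  have coefmid : α 0 * (∑ l ∈ Icc 1 (j-1), (q - 1)/q^l * d l)
      + (1 - pt) * (∑ m ∈ Icc 1 (j-1), α (m+1) * d m)
      + pt * (∑ m ∈ Icc 1 (j-1), (∑ k ∈ Icc 1 (m-1), (q - 1)/q^(m-k) * α k) * d m)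
      ≤ ∑ m ∈ Icc 1 (j-1), α m * d m := by
    rw [Finset.mul_sum, Finset.mul_sum, Finset.mul_sum,
      ← Finset.sum_add_distrib, ← Finset.sum_add_distrib]
    apply Finset.sum_le_sum
    intro m hm
    simp only [Finset.mem_Icc] at hm
    have hα := hd2 m hm.1 hm.2
    have hdm := hd0 m (by omega)
    calc α 0 * ((q - 1)/q^m * d m) + (1 - pt) * (α (m+1) * d m)
          + pt * ((∑ k ∈ Icc 1 (m-1), (q - 1)/q^(m-k) * α k) * d m)
        = ((1 - pt) * α (m+1) + (q - 1)/q^m * α 0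
            + pt * ∑ k ∈ Icc 1 (m-1), (q - 1)/q^(m-k) * α k) * d m := by ring
      _ ≤ α m * d m := mul_le_mul_of_nonneg_right hα hdm
  have coefj : (q - 1)/q^j * α 0 * d j
      + pt * ((∑ k ∈ Icc 1 (j-1), (q - 1)/q^(j-k) * α k) * d j) ≤ α j * d j := by
    have hdj := hd0 j (by omega)
    calc (q - 1)/q^j * α 0 * d j
          + pt * ((∑ k ∈ Icc 1 (j-1), (q - 1)/q^(j-k) * α k) * d j)
        = ((q - 1)/q^j * α 0 + pt * ∑ l ∈ Icc 1 (j-1), (q - 1)/q^(j-l) * α l) * d j := by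
          ring
      _ ≤ α j * d j := mul_le_mul_of_nonneg_right hd3 hdj
  have coefj1 : (α 0 * (1/q^j) + pt * (∑ k ∈ Icc 1 (j-1), α k * (1/q^(j-k))) + pt * α j)
      * d (j+1) ≤ 0 := by
    have hc : 0 ≤ α 0 * (1/q^j) + pt * (∑ k ∈ Icc 1 (j-1), α k * (1/q^(j-k))) + pt * α j := by
      have h1 : 0 ≤ α 0 * (1/q^j) :=
        mul_nonneg (hαpos 0 (by omega)) (by positivity)
      have h2 : 0 ≤ ∑ k ∈ Icc 1 (j-1), α k * (1/q^(j-k)) := by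
        apply Finset.sum_nonneg
        intro k hk
        simp only [Finset.mem_Icc] at hk
        exact mul_nonneg (hαpos k (by omega)) (by positivity)
      have h3 : 0 ≤ pt * α j := mul_nonneg hpt0.le (hαpos j (by omega))
      nlinarith
    calc (α 0 * (1/q^j) + pt * (∑ k ∈ Icc 1 (j-1), α k * (1/q^(j-k))) + pt * α j) * d (j+1)
        ≤ (α 0 * (1/q^j) + pt * (∑ k ∈ Icc 1 (j-1), α k * (1/q^(j-k))) + pt * α j) * 0 :=
          mul_le_mul_of_nonneg_left hp4 hc
      _ = 0 := by ring
  have hd1' : ((1 - pt) * α 1 + 1) * d 0 ≤ α 0 * d 0 :=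
    mul_le_mul_of_nonneg_right hd1 (hd0 0 (by omega))
  have lsplit := sum_Icc_split j hj (fun k => α k * d k)
  rw [lsplit, expand, swap, S1split] at key1
  linarith [key1, shift', coefmid, coefj, coefj1, costm, hd1']

/-- Weak duality between the infinite-dimensional primal program
`(LP)_UB` and its dual `(DLP)_UB`: any dual-feasible `ζ` dominates any primal-feasible
value `d_0`. -/
theorem stmt_9
    (n : ℕ) (hn : 1 ≤ n) (j : ℕ) (hj : 2 ≤ j)
    (q a β pt : ℝ) (hq : 1 < q) (ha : 0 < a) (hβ0 : 0 < β) (hβ1 : β < 1)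
    (hpt0 : 0 < pt) (hpt1 : pt < 1)
    (r : ℝ → ℝ) (hr0 : ∀ v ∈ Set.Icc (0:ℝ) 1, 0 ≤ r v)
    (hrint : IntegrableOn r (Set.Icc 0 1))
    (d : ℕ → ℝ) (hd0 : ∀ k ≤ j + 1, 0 ≤ d k)
    (hp1 : d 0 ≤ (1/β) * (∫ v in (0:ℝ)..1, r v * psiFail β v) + Ctil j q β a r 0
        + (∑ l ∈ Finset.Icc 1 j, (q - 1)/q^l * d l) + (1/q^j) * d (j+1))
    (hp2 : ∀ k, 1 ≤ k → k ≤ j - 1 →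
      d k ≤ (1 - pt) * d (k-1)
        + pt * (Ctil j q β a r k + (∑ l ∈ Finset.Icc 1 (j-k), (q - 1)/q^l * d (k+l))
            + (1/q^(j-k)) * d (j+1)))
    (hp3 : d j ≤ (1 - pt) * d (j-1) + pt * (Ctil j q β a r j + d (j+1)))
    (hp4 : d (j+1) ≤ 0)
    (hp5 : (∫ v in (0:ℝ)..1, r v * ∑ i ∈ Finset.range n, (1-v)^(i+1)) = 1)
    (α : ℕ → ℝ) (hαpos : ∀ k ≤ j + 1, 0 ≤ α k) (ζ : ℝ)
    (hd1 : α 0 ≥ (1 - pt) * α 1 + 1)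
    (hd2 : ∀ k, 1 ≤ k → k ≤ j - 1 →
      α k ≥ (1 - pt) * α (k+1) + (q - 1)/q^k * α 0
        + pt * ∑ l ∈ Finset.Icc 1 (k-1), (q - 1)/q^(k-l) * α l)
    (hd3 : α j ≥ (q - 1)/q^j * α 0 + pt * ∑ l ∈ Finset.Icc 1 (j-1), (q - 1)/q^(j-l) * α l)
    (hd4 : α (j+1) ≥ (1/q^j) * α 0 + pt * ∑ l ∈ Finset.Icc 1 j, (1/q^(j-l)) * α l)
    (hd5 : ∀ v ∈ Set.Icc (0:ℝ) 1,
      ζ * ∑ i ∈ Finset.range n, (1-v)^(i+1)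
        ≥ α 0 / β * (psiFail β v
              + ∑ l ∈ Finset.Icc 0 j, Set.indicator (Set.Icc (0:ℝ) (β/q^l))
                  (fun w => (a*q^l + rho a q l) * psi j q β l w) v)
          + pt/β * ∑ k ∈ Finset.Icc 1 j, α k * q^k *
              (∑ l ∈ Finset.Icc k j, Set.indicator (Set.Icc (0:ℝ) (β/q^l))
                  (fun w => (a*q^l + rho a q l) * psi j q β l w) v)) :
    ζ ≥ d 0 := by
  classical
  have hq0 : (0:ℝ) < q := by linarith
  have hβne : β ≠ 0 := ne_of_gt hβ0
  set c : ℕ → ℝ := fun l => a*q^l + rho a q l with hc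
  -- basic facts about β/q^l
  have hc0 : ∀ l : ℕ, 0 < β/q^l := fun l => div_pos hβ0 (pow_pos hq0 l)
  have hc1 : ∀ l : ℕ, β/q^l ≤ 1 := by
    intro l
    have h1 : (1:ℝ) ≤ q^l := one_le_pow₀ hq.le
    have h2 : β/q^l ≤ β := by
      rw [div_le_iff₀ (by positivity)]
      nlinarith
    linarith
  -- continuity
  have hψc : ∀ l : ℕ, Continuous (psi j q β l) := by
    intro l
    unfold psi
    split
    · exact continuous_const.min (continuous_const.sub continuous_id)
    · exact continuous_const.sub continuous_id
  have hψFc : Continuous (psiFail β) :=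
    continuous_const.min (continuous_const.sub continuous_id)
  have hSc : Continuous (fun v : ℝ => ∑ i ∈ Finset.range n, (1-v)^(i+1)) :=
    continuous_finset_sum _ fun i _ => (continuous_const.sub continuous_id).pow _
  -- integrability on Icc 0 1
  have hiψ : ∀ l : ℕ, IntegrableOn (fun v => r v * psi j q β l v) (Set.Icc 0 1) :=
    fun l => hrint.mul_continuousOn (hψc l).continuousOn isCompact_Icc
  have hiF : IntegrableOn (fun v => r v * psiFail β v) (Set.Ioc 0 1) :=
    (hrint.mul_continuousOn hψFc.continuousOn isCompact_Icc).mono_set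
      Set.Ioc_subset_Icc_self
  have hiS : IntegrableOn (fun v => r v * ∑ i ∈ Finset.range n, (1-v)^(i+1))
      (Set.Ioc 0 1) :=
    (hrint.mul_continuousOn hSc.continuousOn isCompact_Icc).mono_set
      Set.Ioc_subset_Icc_self
  -- the indicator integrands
  set J : ℕ → ℝ → ℝ := fun l v =>
    Set.indicator (Set.Icc (0:ℝ) (β/q^l)) (fun w => c l * (r w * psi j q β l w)) v with hJ
  have hiJ : ∀ l : ℕ, IntegrableOn (J l) (Set.Ioc 0 1) := by
    intro l
    have h1 : IntegrableOn (fun w => c l * (r w * psi j q β l w)) (Set.Icc 0 1) :=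
      (hiψ l).const_mul (c l)
    have h2 : IntegrableOn (fun w => c l * (r w * psi j q β l w)) (Set.Ioc 0 1) :=
      h1.mono_set Set.Ioc_subset_Icc_self
    exact h2.indicator measurableSet_Icc
  have hJval : ∀ l : ℕ, ∫ v in Set.Ioc (0:ℝ) 1, J l v
      = c l * ∫ v in (0:ℝ)..(β/q^l), r v * psi j q β l v := by
    intro l
    rw [hJ]
    rw [MeasureTheory.setIntegral_indicator measurableSet_Icc]
    have hs : Set.Ioc (0:ℝ) 1 ∩ Set.Icc 0 (β/q^l) = Set.Ioc 0 (β/q^l) := by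
      ext x
      simp only [Set.mem_inter_iff, Set.mem_Ioc, Set.mem_Icc]
      constructor
      · rintro ⟨⟨h1, _⟩, _, h4⟩; exact ⟨h1, h4⟩
      · rintro ⟨h1, h2⟩; exact ⟨⟨h1, h2.trans (hc1 l)⟩, h1.le, h2⟩
    rw [hs, intervalIntegral.integral_of_le (hc0 l).le, MeasureTheory.integral_const_mul]
  -- the structured integrand
  set H : ℝ → ℝ := fun v =>
    α 0/β * (r v * psiFail β v + ∑ l ∈ Finset.Icc 0 j, J l v)
      + pt/β * ∑ k ∈ Finset.Icc 1 j, α k * q^k * (∑ l ∈ Finset.Icc k j, J l v) with hH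
  have hintP : IntegrableOn (fun v => ∑ l ∈ Finset.Icc 0 j, J l v) (Set.Ioc 0 1) :=
    integrable_finset_sum _ fun l _ => hiJ l
  have hint1 : IntegrableOn (fun v => r v * psiFail β v + ∑ l ∈ Finset.Icc 0 j, J l v)
      (Set.Ioc 0 1) := hiF.add hintP
  have hint1' : IntegrableOn
      (fun v => α 0/β * (r v * psiFail β v + ∑ l ∈ Finset.Icc 0 j, J l v))
      (Set.Ioc 0 1) := hint1.const_mul _
  have hintQk : ∀ k : ℕ, IntegrableOn
      (fun v => α k * q^k * (∑ l ∈ Finset.Icc k j, J l v)) (Set.Ioc 0 1) :=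
    fun k => (integrable_finset_sum _ fun l _ => hiJ l).const_mul _
  have hintQ : IntegrableOn
      (fun v => ∑ k ∈ Finset.Icc 1 j, α k * q^k * (∑ l ∈ Finset.Icc k j, J l v))
      (Set.Ioc 0 1) := integrable_finset_sum _ fun k _ => hintQk k
  have hintQ' : IntegrableOn
      (fun v => pt/β * ∑ k ∈ Finset.Icc 1 j, α k * q^k * (∑ l ∈ Finset.Icc k j, J l v))
      (Set.Ioc 0 1) := hintQ.const_mul _
  have hiH : IntegrableOn H (Set.Ioc 0 1) := hint1'.add hintQ' 
  -- pointwise identity : r v * (dual RHS) = H v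
  have hpoint : ∀ v : ℝ, r v *
      (α 0 / β * (psiFail β v
            + ∑ l ∈ Finset.Icc 0 j, Set.indicator (Set.Icc (0:ℝ) (β/q^l))
                (fun w => (a*q^l + rho a q l) * psi j q β l w) v)
        + pt/β * ∑ k ∈ Finset.Icc 1 j, α k * q^k *
            (∑ l ∈ Finset.Icc k j, Set.indicator (Set.Icc (0:ℝ) (β/q^l))
                (fun w => (a*q^l + rho a q l) * psi j q β l w) v)) = H v := by
    intro v
    have hRI : ∀ l : ℕ, r v * Set.indicator (Set.Icc (0:ℝ) (β/q^l))
        (fun w => (a*q^l + rho a q l) * psi j q β l w) v = J l v := by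
      intro l
      simp only [hJ, hc, Set.indicator_apply]
      split_ifs <;> ring
    have hrP : ∀ s : Finset ℕ, r v * (∑ l ∈ s, Set.indicator (Set.Icc (0:ℝ) (β/q^l))
        (fun w => (a*q^l + rho a q l) * psi j q β l w) v) = ∑ l ∈ s, J l v := by
      intro s
      rw [Finset.mul_sum]
      exact Finset.sum_congr rfl fun l _ => hRI l
    have hrQ : r v * (∑ k ∈ Finset.Icc 1 j, α k * q^k *
          (∑ l ∈ Finset.Icc k j, Set.indicator (Set.Icc (0:ℝ) (β/q^l))
              (fun w => (a*q^l + rho a q l) * psi j q β l w) v))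
        = ∑ k ∈ Finset.Icc 1 j, α k * q^k * (∑ l ∈ Finset.Icc k j, J l v) := by
      rw [Finset.mul_sum]
      refine Finset.sum_congr rfl fun k _ => ?_
      rw [show r v * (α k * q^k * (∑ l ∈ Finset.Icc k j, Set.indicator (Set.Icc (0:ℝ) (β/q^l))
          (fun w => (a*q^l + rho a q l) * psi j q β l w) v))
        = α k * q^k * (r v * ∑ l ∈ Finset.Icc k j, Set.indicator (Set.Icc (0:ℝ) (β/q^l))
          (fun w => (a*q^l + rho a q l) * psi j q β l w) v) from by ring, hrP]
    calc r v * (α 0 / β * (psiFail β v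
            + ∑ l ∈ Finset.Icc 0 j, Set.indicator (Set.Icc (0:ℝ) (β/q^l))
                (fun w => (a*q^l + rho a q l) * psi j q β l w) v)
        + pt/β * ∑ k ∈ Finset.Icc 1 j, α k * q^k *
            (∑ l ∈ Finset.Icc k j, Set.indicator (Set.Icc (0:ℝ) (β/q^l))
                (fun w => (a*q^l + rho a q l) * psi j q β l w) v))
        = α 0 / β * (r v * psiFail β v
            + r v * ∑ l ∈ Finset.Icc 0 j, Set.indicator (Set.Icc (0:ℝ) (β/q^l))
                (fun w => (a*q^l + rho a q l) * psi j q β l w) v)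
          + pt/β * (r v * ∑ k ∈ Finset.Icc 1 j, α k * q^k *
            (∑ l ∈ Finset.Icc k j, Set.indicator (Set.Icc (0:ℝ) (β/q^l))
                (fun w => (a*q^l + rho a q l) * psi j q β l w) v)) := by ring
      _ = H v := by rw [hrP, hrQ]
  -- the monotone integral step
  have hmono : ∫ v in Set.Ioc (0:ℝ) 1, H v
      ≤ ∫ v in Set.Ioc (0:ℝ) 1, ζ * (r v * ∑ i ∈ Finset.range n, (1-v)^(i+1)) := by
    refine MeasureTheory.setIntegral_mono_on hiH (hiS.const_mul ζ) measurableSet_Ioc ?_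
    intro v hv
    rw [← hpoint v]
    have hvI : v ∈ Set.Icc (0:ℝ) 1 := Set.Ioc_subset_Icc_self hv
    calc r v * (α 0 / β * (psiFail β v
            + ∑ l ∈ Finset.Icc 0 j, Set.indicator (Set.Icc (0:ℝ) (β/q^l))
                (fun w => (a*q^l + rho a q l) * psi j q β l w) v)
        + pt/β * ∑ k ∈ Finset.Icc 1 j, α k * q^k *
            (∑ l ∈ Finset.Icc k j, Set.indicator (Set.Icc (0:ℝ) (β/q^l))
                (fun w => (a*q^l + rho a q l) * psi j q β l w) v))
        ≤ r v * (ζ * ∑ i ∈ Finset.range n, (1-v)^(i+1)) :=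
          mul_le_mul_of_nonneg_left (hd5 v hvI) (hr0 v hvI)
      _ = ζ * (r v * ∑ i ∈ Finset.range n, (1-v)^(i+1)) := by ring
  -- evaluate the right-hand side
  have hζval : ∫ v in Set.Ioc (0:ℝ) 1, ζ * (r v * ∑ i ∈ Finset.range n, (1-v)^(i+1)) = ζ := by
    rw [MeasureTheory.integral_const_mul,
      ← intervalIntegral.integral_of_le (zero_le_one), hp5, mul_one]
  -- evaluate the left-hand side
  have hHval : ∫ v in Set.Ioc (0:ℝ) 1, H v
      = α 0 * ((1/β) * ∫ v in (0:ℝ)..1, r v * psiFail β v)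
        + α 0 * Ctil j q β a r 0
        + pt * ∑ k ∈ Finset.Icc 1 j, α k * Ctil j q β a r k := by
    simp only [hH]
    rw [MeasureTheory.integral_add hint1' hintQ',
      MeasureTheory.integral_const_mul, MeasureTheory.integral_const_mul,
      MeasureTheory.integral_add hiF hintP,
      MeasureTheory.integral_finset_sum _ (fun l _ => hiJ l),
      MeasureTheory.integral_finset_sum _ (fun k _ => hintQk k)]
    have e0 : ∫ v in Set.Ioc (0:ℝ) 1, r v * psiFail β v
        = ∫ v in (0:ℝ)..1, r v * psiFail β v :=
      (intervalIntegral.integral_of_le zero_le_one).symm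
    have e1 : ∀ s : Finset ℕ, ∑ l ∈ s, ∫ v in Set.Ioc (0:ℝ) 1, J l v
        = ∑ l ∈ s, (a*q^l + rho a q l) * ∫ v in (0:ℝ)..(β/q^l), r v * psi j q β l v := by
      intro s
      refine Finset.sum_congr rfl fun l _ => ?_
      rw [hJval l, hc]
    have e2 : ∀ k ∈ Finset.Icc 1 j,
        ∫ v in Set.Ioc (0:ℝ) 1, α k * q^k * (∑ l ∈ Finset.Icc k j, J l v)
        = α k * q^k * ∑ l ∈ Finset.Icc k j,
            (a*q^l + rho a q l) * ∫ v in (0:ℝ)..(β/q^l), r v * psi j q β l v := by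
      intro k _
      rw [MeasureTheory.integral_const_mul,
        MeasureTheory.integral_finset_sum _ (fun l _ => hiJ l), e1]
    rw [Finset.sum_congr rfl e2, e0, e1]
    have hCtil : ∀ k : ℕ, α k * Ctil j q β a r k
        = 1/β * (α k * q^k * ∑ l ∈ Finset.Icc k j,
            (a*q^l + rho a q l) * ∫ v in (0:ℝ)..(β/q^l), r v * psi j q β l v) := by
      intro k
      unfold Ctil
      field_simp
    have hCtil0 : Ctil j q β a r 0
        = 1/β * ∑ l ∈ Finset.Icc 0 j,
            (a*q^l + rho a q l) * ∫ v in (0:ℝ)..(β/q^l), r v * psi j q β l v := by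
      unfold Ctil
      norm_num
    rw [Finset.sum_congr rfl (fun k _ => hCtil k), ← Finset.mul_sum, hCtil0]
    ring
  -- finite-dimensional weak duality (step A)
  have hA : d 0 ≤ α 0 * ((1/β) * ∫ v in (0:ℝ)..1, r v * psiFail β v)
      + α 0 * Ctil j q β a r 0
      + pt * ∑ k ∈ Finset.Icc 1 j, α k * Ctil j q β a r k :=
    stepA j hj q pt hq hpt0 hpt1 (Ctil j q β a r)
      ((1/β) * ∫ v in (0:ℝ)..1, r v * psiFail β v) d hd0 hp1 hp2 hp3 hp4
      α hαpos hd1 hd2 hd3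
  calc d 0 ≤ _ := hA
    _ = ∫ v in Set.Ioc (0:ℝ) 1, H v := hHval.symm
    _ ≤ ∫ v in Set.Ioc (0:ℝ) 1, ζ * (r v * ∑ i ∈ Finset.range n, (1-v)^(i+1)) := hmono
    _ = ζ := hζval
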